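/- Let K be a field, let n ≥ 2, and let I be the ideal of K[X_0, X_1, …, X_n] generated by F_{i,j} = X_{i-1}·X_{j+1} − X_i·X_j for 1 ≤ i ≤ j ≤ n−1. Then the images in the quotient K[X_0, …, X_n]/I of all distinct monomials of the form X_k^i X_{k+1}^j, where 0 ≤ k ≤ n−1 and i, j ≥ 0, form a K-linear basis of K[X_0, …, X_n]/I. -/

import Mathlib

open MvPolynomial

set_option maxHeartbeats 2000000


noncomputable def psi (K : Type*) [CommSemiring K] (n : ℕ) :
    MvPolynomial (Fin (n + 1)) K →ₐ[K] MvPolynomial (Fin 2) K :=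
  aeval (fun i => X 0 ^ (n - (i : ℕ)) * X 1 ^ (i : ℕ))

lemma psi_X {K : Type*} [CommSemiring K] {n : ℕ} (k : Fin (n + 1)) :
    psi K n (X k) = X 0 ^ (n - (k : ℕ)) * X 1 ^ (k : ℕ) := aeval_X _ k

lemma psi_XX {K : Type*} [CommSemiring K] {n : ℕ} (a b : ℕ) (ha : a ≤ n) (hb : b ≤ n) :
    psi K n (X ⟨a, Nat.lt_succ_of_le (by omega)⟩ * X ⟨b, Nat.lt_succ_of_le (by omega)⟩) =
      X 0 ^ ((n - a) + (n - b)) * X 1 ^ (a + b) := by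
  rw [map_mul, psi_X, psi_X, pow_add, pow_add]
  ring

lemma psi_mono {K : Type*} [CommSemiring K] {n : ℕ} (hn : 2 ≤ n) (k i j : ℕ) (hk : k ≤ n - 1) :
    psi K n (X ⟨k, Nat.lt_succ_of_le (by omega)⟩ ^ i * X ⟨k + 1, Nat.lt_succ_of_le (by omega)⟩ ^ j) =
      monomial (Finsupp.single 0 ((n - k) * i + (n - k - 1) * j)
        + Finsupp.single 1 (k * i + (k + 1) * j)) 1 := by
  rw [map_mul, map_pow, map_pow, psi_X, psi_X]
  simp only [mul_pow, ← pow_mul]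
  have h1 : n - (k + 1) = n - k - 1 := by omega
  rw [h1]
  rw [show (X 0 : MvPolynomial (Fin 2) K) ^ ((n-k)*i) * X 1 ^ (k*i) *
      (X 0 ^ ((n-k-1)*j) * X 1 ^ ((k+1)*j))
      = (X 0 ^ ((n-k)*i) * X 0 ^ ((n-k-1)*j)) * (X 1 ^ (k*i) * X 1 ^ ((k+1)*j)) by ring,
    ← pow_add, ← pow_add, X_pow_eq_monomial, X_pow_eq_monomial, monomial_mul, mul_one]


lemma mono_eq_le {K : Type*} [CommSemiring K] {n : ℕ} (hn : 2 ≤ n)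
    {k k' i j i' j' : ℕ} (hk : k ≤ n - 1) (hk' : k' ≤ n - 1) (hkk : k ≤ k')
    (ha : (n - k) * i + (n - k - 1) * j = (n - k') * i' + (n - k' - 1) * j')
    (hb : k * i + (k + 1) * j = k' * i' + (k' + 1) * j') :
    (X (⟨k, Nat.lt_succ_of_le (by omega)⟩ : Fin (n + 1)) : MvPolynomial (Fin (n + 1)) K) ^ i * X ⟨k + 1, Nat.lt_succ_of_le (by omega)⟩ ^ j
      = X ⟨k', Nat.lt_succ_of_le (by omega)⟩ ^ i' * X ⟨k' + 1, Nat.lt_succ_of_le (by omega)⟩ ^ j' := by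
  have e1 : (n - k) * i + k * i = n * i := by rw [← add_mul]; congr 1; omega
  have e2 : (n - k - 1) * j + (k + 1) * j = n * j := by rw [← add_mul]; congr 1; omega
  have e1' : (n - k') * i' + k' * i' = n * i' := by rw [← add_mul]; congr 1; omega
  have e2' : (n - k' - 1) * j' + (k' + 1) * j' = n * j' := by rw [← add_mul]; congr 1; omega
  obtain ⟨d, hdd⟩ : ∃ d, d = i + j := ⟨_, rfl⟩
  have hd : d = i' + j' := by
    have : n * (i + j) = n * (i' + j') := by
      rw [Nat.mul_add, Nat.mul_add, ← e1, ← e2, ← e1', ← e2']; omega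
    have := Nat.eq_of_mul_eq_mul_left (show 0 < n by omega) this
    omega
  have hb' : k * d + j = k' * d + j' := by
    have t1 : k * i + (k + 1) * j = k * d + j := by rw [hdd]; ring
    have t2 : k' * i' + (k' + 1) * j' = k' * d + j' := by rw [hd]; ring
    omega
  rcases Nat.eq_zero_or_pos d with h0 | hdpos
  · have : i = 0 ∧ j = 0 ∧ i' = 0 ∧ j' = 0 := by omega
    obtain ⟨rfl, rfl, rfl, rfl⟩ := this
    simp
  rcases Nat.eq_or_lt_of_le hkk with rfl | hlt
  · have hj : j = j' := by omega
    have hi : i = i' := by omega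
    rw [hi, hj]
  · -- k < k', forces k' = k + 1, j = d, j' = 0
    have hle1 : (k + 1) * d ≤ k' * d := Nat.mul_le_mul_right d hlt
    have hjd : j ≤ d := by omega
    have hexp : (k + 1) * d = k * d + d := by ring
    have hup : k' * d ≤ (k + 1) * d := by omega
    have hk1 : k' = k + 1 := by
      have := Nat.le_of_mul_le_mul_right hup hdpos
      omega
    have hj : j = d := by omega
    have hj' : j' = 0 := by omega
    have hi : i = 0 := by omega
    have hi' : i' = d := by omega
    rw [hi, hj, hi', hj', pow_zero, pow_zero, one_mul, mul_one]
    exact congrArg (· ^ d) (congrArg X (Fin.ext (by simp [hk1])))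

lemma mono_eq {K : Type*} [CommSemiring K] {n : ℕ} (hn : 2 ≤ n)
    {k k' i j i' j' : ℕ} (hk : k ≤ n - 1) (hk' : k' ≤ n - 1)
    (ha : (n - k) * i + (n - k - 1) * j = (n - k') * i' + (n - k' - 1) * j')
    (hb : k * i + (k + 1) * j = k' * i' + (k' + 1) * j') :
    (X (⟨k, Nat.lt_succ_of_le (by omega)⟩ : Fin (n + 1)) : MvPolynomial (Fin (n + 1)) K) ^ i * X ⟨k + 1, Nat.lt_succ_of_le (by omega)⟩ ^ j
      = X ⟨k', Nat.lt_succ_of_le (by omega)⟩ ^ i' * X ⟨k' + 1, Nat.lt_succ_of_le (by omega)⟩ ^ j' := by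
  rcases le_total k k' with h | h
  · exact mono_eq_le hn hk hk' h ha hb
  · exact (mono_eq_le hn hk' hk h ha.symm hb.symm).symm


noncomputable def wgt {n : ℕ} (u : Fin (n + 1) →₀ ℕ) : ℕ :=
  u.sum fun i e => e * (i : ℕ) ^ 2

lemma wgt_add {n : ℕ} (u v : Fin (n + 1) →₀ ℕ) : wgt (u + v) = wgt u + wgt v :=
  Finsupp.sum_add_index' (fun _ => by simp) (fun _ a b => add_mul a b _)

lemma wgt_single {n : ℕ} (c : Fin (n + 1)) (e : ℕ) : wgt (Finsupp.single c e) = e * (c : ℕ) ^ 2 :=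
  Finsupp.sum_single_index (by simp)

lemma X_eq_monomial {K : Type*} [CommSemiring K] {n : ℕ} (c : Fin (n + 1)) :
    (X c : MvPolynomial (Fin (n + 1)) K) = monomial (Finsupp.single c 1) 1 := by
  rw [← X_pow_eq_monomial, pow_one]

lemma span_mono {K : Type*} [Field K] {n : ℕ} (hn : 2 ≤ n)
    (I : Ideal (MvPolynomial (Fin (n + 1)) K)) (S : Set (MvPolynomial (Fin (n + 1)) K ⧸ I))
    (hgen : ∀ a b : ℕ, (hb : b ≤ n) → (hab : a + 2 ≤ b) →
      (X (⟨a, Nat.lt_succ_of_le (by omega)⟩ : Fin (n + 1)) : MvPolynomial (Fin (n + 1)) K) * X ⟨b, Nat.lt_succ_of_le (by omega)⟩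
        - X ⟨a + 1, Nat.lt_succ_of_le (by omega)⟩ * X ⟨b - 1, Nat.lt_succ_of_le (by omega)⟩ ∈ I)
    (hSmem : ∀ k i j : ℕ, (hk : k ≤ n - 1) →
      Ideal.Quotient.mk I ((X (⟨k, Nat.lt_succ_of_le (by omega)⟩ : Fin (n + 1)) : MvPolynomial (Fin (n + 1)) K) ^ i
        * X ⟨k + 1, Nat.lt_succ_of_le (by omega)⟩ ^ j) ∈ S) :
    ∀ u : Fin (n + 1) →₀ ℕ, Ideal.Quotient.mk I (monomial u 1) ∈ Submodule.span K S := by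
  suffices H : ∀ N : ℕ, ∀ u : Fin (n + 1) →₀ ℕ, wgt u ≤ N →
      Ideal.Quotient.mk I (monomial u 1) ∈ Submodule.span K S by
    intro u; exact H (wgt u) u le_rfl
  intro N
  induction N using Nat.strong_induction_on with
  | _ N ih =>
    intro u hu
    by_cases hsupp : u.support.Nonempty
    · obtain ⟨a, ha_def⟩ : ∃ a, a = u.support.min' hsupp := ⟨_, rfl⟩
      obtain ⟨b, hb_def⟩ : ∃ b, b = u.support.max' hsupp := ⟨_, rfl⟩
      have hamem : a ∈ u.support := ha_def ▸ u.support.min'_mem hsupp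
      have hbmem : b ∈ u.support := hb_def ▸ u.support.max'_mem hsupp
      have hab : (a : ℕ) ≤ (b : ℕ) := ha_def ▸ hb_def ▸ u.support.min'_le b hbmem
      have hbn : (b : ℕ) ≤ n := by omega
      by_cases hgap : (b : ℕ) ≤ (a : ℕ) + 1
      · -- support ⊆ {a, b}, good form
        have hsub : ∀ x ∈ u.support, x = a ∨ x = b := by
          intro x hx
          have h1 : (a : ℕ) ≤ (x : ℕ) := ha_def ▸ u.support.min'_le x hx
          have h2 : (x : ℕ) ≤ (b : ℕ) := hb_def ▸ u.support.le_max' x hx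
          rcases Nat.lt_or_ge (x : ℕ) (b : ℕ) with h | h
          · left; exact Fin.ext (by omega)
          · right; exact Fin.ext (by omega)
        rcases eq_or_ne a b with hab' | hab'
        · -- u = single a (u a)
          have hu1 : u = Finsupp.single a (u a) := by
            ext x
            rcases eq_or_ne x a with rfl | hx
            · simp
            · rw [Finsupp.single_eq_of_ne' hx.symm]
              by_contra h
              rcases hsub x (Finsupp.mem_support_iff.mpr h) with h' | h'
              · exact hx h'
              · exact hx (h'.trans hab'.symm)
          rcases Nat.lt_or_ge (a : ℕ) n with han | han
          · have key : Ideal.Quotient.mk I (monomial u (1 : K)) =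
                Ideal.Quotient.mk I ((X (⟨(a : ℕ), Nat.lt_succ_of_le (by omega)⟩ : Fin (n + 1))
                  : MvPolynomial (Fin (n + 1)) K) ^ (u a) * X ⟨(a : ℕ) + 1, Nat.lt_succ_of_le (by omega)⟩ ^ 0) := by
              conv_lhs => rw [hu1]
              rw [pow_zero, mul_one, X_pow_eq_monomial]
            rw [key]
            exact Submodule.subset_span (hSmem (a : ℕ) (u a) 0 (by omega))
          · have han' : (a : ℕ) = n := by omega
            have hba : (⟨n - 1 + 1, Nat.lt_succ_of_le (by omega)⟩ : Fin (n + 1)) = a := Fin.ext (by simp; omega)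
            have key : Ideal.Quotient.mk I (monomial u (1 : K)) =
                Ideal.Quotient.mk I ((X (⟨n - 1, Nat.lt_succ_of_le (by omega)⟩ : Fin (n + 1))
                  : MvPolynomial (Fin (n + 1)) K) ^ 0 * X ⟨n - 1 + 1, Nat.lt_succ_of_le (by omega)⟩ ^ (u a)) := by
              conv_lhs => rw [hu1]
              rw [pow_zero, one_mul, X_pow_eq_monomial, hba]
            rw [key]
            exact Submodule.subset_span (hSmem (n - 1) 0 (u a) (by omega))
        · -- a < b, b = a + 1
          have hfval : (b : ℕ) = (a : ℕ) + 1 := by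
            have hne : (a : ℕ) ≠ (b : ℕ) := fun h => hab' (Fin.ext h)
            omega
          have hu1 : u = Finsupp.single a (u a) + Finsupp.single b (u b) := by
            ext x
            rcases eq_or_ne x a with rfl | hxa
            · rw [Finsupp.add_apply, Finsupp.single_eq_same,
                Finsupp.single_eq_of_ne' hab'.symm, add_zero]
            · rcases eq_or_ne x b with rfl | hxb
              · rw [Finsupp.add_apply, Finsupp.single_eq_same,
                  Finsupp.single_eq_of_ne' hab', zero_add]
              · rw [Finsupp.add_apply, Finsupp.single_eq_of_ne' hxa.symm,
                  Finsupp.single_eq_of_ne' hxb.symm, add_zero]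
                exact by_contra fun h => by
                  rcases hsub x (Finsupp.mem_support_iff.mpr h) with h' | h'
                  exacts [hxa h', hxb h']
          have hale : (a : ℕ) ≤ n - 1 := by omega
          have hba : (⟨(a : ℕ) + 1, Nat.lt_succ_of_le (by omega)⟩ : Fin (n + 1)) = b := Fin.ext (by simp [hfval])
          have key : Ideal.Quotient.mk I (monomial u (1 : K)) =
              Ideal.Quotient.mk I ((X (⟨(a : ℕ), Nat.lt_succ_of_le (by omega)⟩ : Fin (n + 1))
                : MvPolynomial (Fin (n + 1)) K) ^ (u a) * X ⟨(a : ℕ) + 1, Nat.lt_succ_of_le (by omega)⟩ ^ (u b)) := by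
            conv_lhs => rw [hu1]
            rw [X_pow_eq_monomial, X_pow_eq_monomial, monomial_mul, mul_one]
            simp only [hba]
          rw [key]
          exact Submodule.subset_span (hSmem (a : ℕ) (u a) (u b) hale)
      · -- straightening step
        push_neg at hgap
        have hA : (a : ℕ) + 2 ≤ (b : ℕ) := hgap
        have hane : a ≠ b := fun h => by rw [h] at hA; omega
        have hua : 1 ≤ u a := Nat.one_le_iff_ne_zero.mpr (Finsupp.mem_support_iff.mp hamem)
        have hub : 1 ≤ u b := Nat.one_le_iff_ne_zero.mpr (Finsupp.mem_support_iff.mp hbmem)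
        obtain ⟨u', hu'def⟩ : ∃ u', u' = u - Finsupp.single a 1 - Finsupp.single b 1 := ⟨_, rfl⟩
        have hu1 : u = u' + Finsupp.single a 1 + Finsupp.single b 1 := by
          ext x
          rw [hu'def]
          simp only [Finsupp.add_apply, Finsupp.tsub_apply, Finsupp.single_apply]
          rcases eq_or_ne a x with rfl | hxa
          · rw [if_pos rfl, if_neg (fun h : b = a => hane h.symm)]
            omega
          · rcases eq_or_ne b x with rfl | hxb
            · rw [if_pos rfl, if_neg hxa]
              omega
            · rw [if_neg hxa, if_neg hxb]; omega
        obtain ⟨c, hc_def⟩ : ∃ c : Fin (n + 1), c = ⟨(a : ℕ) + 1, Nat.lt_succ_of_le (by omega)⟩ := ⟨_, rfl⟩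
        obtain ⟨d, hd_def⟩ : ∃ d : Fin (n + 1), d = ⟨(b : ℕ) - 1, Nat.lt_succ_of_le (by omega)⟩ := ⟨_, rfl⟩
        obtain ⟨v, hv_def⟩ : ∃ v, v = u' + Finsupp.single c 1 + Finsupp.single d 1 := ⟨_, rfl⟩
        have hmul : ∀ (w : Fin (n + 1) →₀ ℕ) (c₁ c₂ : Fin (n + 1)),
            (monomial (w + Finsupp.single c₁ 1 + Finsupp.single c₂ 1) (1 : K)) =
              monomial w 1 * (X c₁ * X c₂) := by
          intro w c₁ c₂
          rw [X_eq_monomial, X_eq_monomial, monomial_mul, monomial_mul, mul_one, mul_one,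
            add_assoc]
        have hdiff : monomial u (1 : K) - monomial v 1 =
            monomial u' 1 * (X a * X b - X c * X d) := by
          rw [mul_sub, hu1, hv_def, hmul, hmul]
        have hmem : monomial u (1 : K) - monomial v 1 ∈ I := by
          rw [hdiff]
          refine Ideal.mul_mem_left I _ ?_
          have h0 := hgen (a : ℕ) (b : ℕ) hbn hA
          have e1 : (⟨(a : ℕ), Nat.lt_succ_of_le (by omega)⟩ : Fin (n + 1)) = a := Fin.ext rfl
          have e2 : (⟨(b : ℕ), Nat.lt_succ_of_le (by omega)⟩ : Fin (n + 1)) = b := Fin.ext rfl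
          rwa [e1, e2, ← hc_def, ← hd_def] at h0
        have hmk : Ideal.Quotient.mk I (monomial u (1 : K)) = Ideal.Quotient.mk I (monomial v 1) :=
          Ideal.Quotient.eq.mpr hmem
        rw [hmk]
        have hwlt : wgt v < wgt u := by
          rw [hu1, hv_def, wgt_add, wgt_add, wgt_add, wgt_add, wgt_single, wgt_single,
            wgt_single, wgt_single, hc_def, hd_def]
          simp only [one_mul]
          obtain ⟨A, hAeq⟩ : ∃ A, (a : ℕ) = A := ⟨_, rfl⟩
          obtain ⟨C, hCeq⟩ : ∃ C, (b : ℕ) = C + 1 := ⟨(b : ℕ) - 1, by omega⟩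
          rw [hAeq, hCeq]
          simp only [Nat.add_sub_cancel]
          have e1 : (A + 1) ^ 2 = A ^ 2 + 2 * A + 1 := by ring
          have e2 : (C + 1) ^ 2 = C ^ 2 + 2 * C + 1 := by ring
          omega
        have hwu : wgt u ≤ N := hu
        exact ih (wgt v) (by omega) v le_rfl
    · -- u = 0
      have hu0 : u = 0 := by
        rw [← Finsupp.support_eq_empty]
        exact Finset.not_nonempty_iff_eq_empty.mp hsupp
      have key : Ideal.Quotient.mk I (monomial u (1 : K)) =
          Ideal.Quotient.mk I ((X (⟨0, Nat.lt_succ_of_le (by omega)⟩ : Fin (n + 1))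
            : MvPolynomial (Fin (n + 1)) K) ^ 0 * X ⟨1, Nat.lt_succ_of_le (by omega)⟩ ^ 0) := by
        rw [pow_zero, pow_zero, mul_one, hu0]
        simp
      rw [key]
      exact Submodule.subset_span (hSmem 0 0 0 (by omega))


/-- The images in `K[X₀,…,Xₙ]/I` of the distinct monomials
`X_k^i X_{k+1}^j` (`0 ≤ k ≤ n-1`, `i, j ≥ 0`), taken as a set, form a `K`-linear basis
of the quotient, where `I` is generated by the `F_{i,j} = X_{i-1} X_{j+1} - X_i X_j`. -/
theorem veronese_quotient_basis (K : Type*) [Field K] (n : ℕ) (hn : 2 ≤ n)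
    (I : Ideal (MvPolynomial (Fin (n + 1)) K))
    (hI : I = Ideal.span {f : MvPolynomial (Fin (n + 1)) K |
      ∃ (i j : ℕ) (_ : 1 ≤ i) (_ : i ≤ j) (_ : j ≤ n - 1),
        f = X (⟨i - 1, by omega⟩ : Fin (n + 1)) * X ⟨j + 1, by omega⟩
          - X ⟨i, by omega⟩ * X ⟨j, by omega⟩})
    (S : Set (MvPolynomial (Fin (n + 1)) K ⧸ I))
    (hS : S = {m | ∃ (k i j : ℕ) (_ : k ≤ n - 1),
      m = Ideal.Quotient.mk I (X (⟨k, by omega⟩ : Fin (n + 1)) ^ i * X ⟨k + 1, by omega⟩ ^ j)}) :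
    LinearIndependent K (fun m : S => (m : MvPolynomial (Fin (n + 1)) K ⧸ I)) ∧
      Submodule.span K S = ⊤ := by
  constructor
  · -- linear independence
    have hker : ∀ p ∈ I, psi K n p = 0 := by
      intro p hp
      rw [hI] at hp
      have hle : Ideal.span {f : MvPolynomial (Fin (n + 1)) K |
          ∃ (i j : ℕ) (_ : 1 ≤ i) (_ : i ≤ j) (_ : j ≤ n - 1),
            f = X (⟨i - 1, by omega⟩ : Fin (n + 1)) * X ⟨j + 1, by omega⟩
              - X ⟨i, by omega⟩ * X ⟨j, by omega⟩} ≤ RingHom.ker (psi K n).toRingHom := by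
        rw [Ideal.span_le]
        rintro f ⟨i, j, h1, h2, h3, rfl⟩
        simp only [SetLike.mem_coe, RingHom.mem_ker]
        show psi K n _ = 0
        rw [map_sub, psi_XX _ _ (by omega) (by omega), psi_XX _ _ (by omega) (by omega)]
        have e1 : n - (i - 1) + (n - (j + 1)) = n - i + (n - j) := by omega
        have e2 : (i - 1) + (j + 1) = i + j := by omega
        rw [e1, e2, sub_self]
      have := hle hp
      rwa [RingHom.mem_ker] at this
    let psibar : MvPolynomial (Fin (n + 1)) K ⧸ I →ₐ[K] MvPolynomial (Fin 2) K :=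
      Ideal.Quotient.liftₐ I (psi K n) hker
    have hlift : ∀ p, psibar (Ideal.Quotient.mk I p) = psi K n p := by
      intro p
      rw [Ideal.Quotient.liftₐ_apply]
      rfl
    have hrep0 : ∀ x : MvPolynomial (Fin (n + 1)) K ⧸ I, x ∈ S → ∃ (k i j : ℕ) (_ : k ≤ n - 1),
        x = Ideal.Quotient.mk I
          ((X (⟨k, by omega⟩ : Fin (n + 1)) : MvPolynomial (Fin (n + 1)) K) ^ i
            * X ⟨k + 1, by omega⟩ ^ j) := by
      intro x hx
      rw [hS] at hx
      exact hx
    have hrep : ∀ m : S, ∃ (k i j : ℕ) (_ : k ≤ n - 1),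
        (m : MvPolynomial (Fin (n + 1)) K ⧸ I) = Ideal.Quotient.mk I
          ((X (⟨k, by omega⟩ : Fin (n + 1)) : MvPolynomial (Fin (n + 1)) K) ^ i
            * X ⟨k + 1, by omega⟩ ^ j) := fun m => hrep0 m m.2
    have inj : ∀ m₁ m₂ : S, psibar m₁ = psibar m₂ → m₁ = m₂ := by
      intro m₁ m₂ h
      obtain ⟨k₁, i₁, j₁, hk₁, hm₁⟩ := hrep m₁
      obtain ⟨k₂, i₂, j₂, hk₂, hm₂⟩ := hrep m₂
      rw [hm₁, hm₂, hlift, hlift, psi_mono hn k₁ i₁ j₁ hk₁, psi_mono hn k₂ i₂ j₂ hk₂] at h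
      have he := monomial_left_injective (one_ne_zero (α := K)) h
      have c0 := DFunLike.congr_fun he (0 : Fin 2)
      have c1 := DFunLike.congr_fun he (1 : Fin 2)
      simp only [Finsupp.add_apply, Finsupp.single_apply, if_pos rfl] at c0 c1
      rw [if_neg (by decide : ¬ ((1 : Fin 2) = 0)), if_neg (by decide : ¬ ((1 : Fin 2) = 0)),
        add_zero, add_zero] at c0
      rw [if_neg (by decide : ¬ ((0 : Fin 2) = 1)), if_neg (by decide : ¬ ((0 : Fin 2) = 1)),
        zero_add, zero_add] at c1
      have hPP := mono_eq (K := K) hn hk₁ hk₂ c0 c1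
      exact Subtype.ext (by rw [hm₁, hm₂, hPP])
    have li : LinearIndependent K (fun d : Fin 2 →₀ ℕ => (monomial d (1 : K))) := by
      have := (basisMonomials (Fin 2) K).linearIndependent
      rwa [coe_basisMonomials] at this
    refine LinearIndependent.of_comp psibar.toLinearMap ?_
    have hg : ∀ m : S, ∃ d : Fin 2 →₀ ℕ,
        psibar (m : MvPolynomial (Fin (n + 1)) K ⧸ I) = monomial d 1 := by
      intro m
      obtain ⟨k, i, j, hk, hm⟩ := hrep m
      exact ⟨_, by rw [hm, hlift, psi_mono hn k i j hk]⟩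
    choose g hgspec using hg
    have hginj : Function.Injective g := by
      intro m₁ m₂ h
      exact inj m₁ m₂ (by rw [hgspec, hgspec, h])
    have hcomp : (⇑psibar.toLinearMap ∘ fun m : S => (m : MvPolynomial (Fin (n + 1)) K ⧸ I))
        = (fun d : Fin 2 →₀ ℕ => (monomial d (1 : K))) ∘ g := by
      funext m
      simpa using hgspec m
    rw [hcomp]
    exact li.comp g hginj
  · -- spanning
    have hgen : ∀ a b : ℕ, (hb : b ≤ n) → (hab : a + 2 ≤ b) →
        (X (⟨a, by omega⟩ : Fin (n + 1)) : MvPolynomial (Fin (n + 1)) K) * X ⟨b, by omega⟩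
          - X ⟨a + 1, by omega⟩ * X ⟨b - 1, by omega⟩ ∈ I := by
      intro a b hb hab
      rw [hI]
      refine Ideal.subset_span ⟨a + 1, b - 1, by omega, by omega, by omega, ?_⟩
      have e1 : (⟨a + 1 - 1, by omega⟩ : Fin (n + 1)) = ⟨a, by omega⟩ :=
        Fin.ext (show a + 1 - 1 = a by omega)
      have e2 : (⟨b - 1 + 1, by omega⟩ : Fin (n + 1)) = ⟨b, by omega⟩ :=
        Fin.ext (show b - 1 + 1 = b by omega)
      rw [e1, e2]
    have hSmem : ∀ k i j : ℕ, (hk : k ≤ n - 1) →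
        Ideal.Quotient.mk I ((X (⟨k, by omega⟩ : Fin (n + 1)) : MvPolynomial (Fin (n + 1)) K) ^ i
          * X ⟨k + 1, by omega⟩ ^ j) ∈ S := by
      intro k i j hk
      rw [hS]
      exact ⟨k, i, j, hk, rfl⟩
    have hmono := span_mono hn I S hgen hSmem
    have hsmul : ∀ (c : K) (x : MvPolynomial (Fin (n + 1)) K),
        Ideal.Quotient.mk I (c • x) = c • Ideal.Quotient.mk I x := by
      intro c x
      rw [← Ideal.Quotient.mkₐ_eq_mk K I, map_smul]
    rw [eq_top_iff]
    rintro q -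
    obtain ⟨p, rfl⟩ := Ideal.Quotient.mk_surjective q
    rw [as_sum p, map_sum]
    refine Submodule.sum_mem _ fun v hv => ?_
    have hcv : monomial v (coeff v p) = (coeff v p) • monomial v (1 : K) := by
      rw [smul_monomial, smul_eq_mul, mul_one]
    rw [hcv, hsmul]
    exact Submodule.smul_mem _ _ (hmono v)
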